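/- arXiv:2209.14390 — 2 statements merged into one kernel-verified Lean document; each statement's English description precedes it below -/
import Mathlib

section
/- With the momentum sequence above (v_k = β v_{k−1} − η g_{k−1}, x_k = x_{k−1} + v_k, v₀ = 0, z_k = (1/(1−β))x_k − (β/(1−β))x_{k−1}, z₀ = x₀), for every K ≥ 1: ∑_{k=0}^{K−1} ‖z_k − x_k‖² ≤ (η²β²/(1−β)⁴) ∑_{k=0}^{K−1} ‖g_k‖². -/
/-- With the momentum updates `v_{k+1} = β v_k − η g_k`, `x_{k+1} = x_k + v_{k+1}`,
`v₀ = 0`, and the auxiliary sequence `z₀ = x₀`,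
`z_{k+1} = (1/(1−β)) x_{k+1} − (β/(1−β)) x_k`, for every `K ≥ 1`:
`∑_{k=0}^{K−1} ‖z_k − x_k‖² ≤ (η²β²/(1−β)⁴) ∑_{k=0}^{K−1} ‖g_k‖²`. -/
theorem stmt_14 {d : ℕ} (β η : ℝ) (hβ0 : 0 ≤ β) (hβ1 : β < 1) (hη : 0 < η)
    (g x v z : ℕ → EuclideanSpace ℝ (Fin d))
    (hv0 : v 0 = 0)
    (hv : ∀ k, v (k + 1) = β • v k - η • g k)
    (hx : ∀ k, x (k + 1) = x k + v (k + 1))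
    (hz0 : z 0 = x 0)
    (hz : ∀ k, z (k + 1) = (1 / (1 - β)) • x (k + 1) - (β / (1 - β)) • x k)
    (K : ℕ) (hK : 1 ≤ K) :
    ∑ k ∈ Finset.range K, ‖z k - x k‖ ^ 2
      ≤ η ^ 2 * β ^ 2 / (1 - β) ^ 4 * ∑ k ∈ Finset.range K, ‖g k‖ ^ 2 := by
  have hb : (0:ℝ) < 1 - β := by linarith
  -- z k - x k = (β/(1-β)) • v k
  have hzx : ∀ k, z k - x k = (β / (1 - β)) • v k := by
    intro k
    cases k with
    | zero => simp [hz0, hv0]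
    | succ n =>
      rw [hz n, hx n]
      have : (1 / (1 - β)) - 1 = β / (1 - β) := by field_simp; ring
      rw [show (1 / (1 - β)) • (x n + v (n+1)) - (β / (1 - β)) • x n - (x n + v (n+1))
          = (1/(1-β) - (β/(1-β)) - 1) • x n + (1/(1-β) - 1) • v (n+1) by
        simp [sub_smul, smul_add]; abel]
      have h1 : 1/(1-β) - β/(1-β) - 1 = 0 := by field_simp; ring
      rw [h1, this]; simp
  -- recursive bound on ‖v‖²
  have hrec : ∀ k, ‖v (k+1)‖^2 ≤ β * ‖v k‖^2 + η^2/(1-β) * ‖g k‖^2 := by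
    intro k
    have htri : ‖v (k+1)‖ ≤ β * ‖v k‖ + η * ‖g k‖ := by
      rw [hv k]
      calc ‖β • v k - η • g k‖ ≤ ‖β • v k‖ + ‖η • g k‖ := norm_sub_le _ _
        _ = β * ‖v k‖ + η * ‖g k‖ := by
            rw [norm_smul, norm_smul, Real.norm_eq_abs, Real.norm_eq_abs,
              abs_of_nonneg hβ0, abs_of_nonneg hη.le]
    have hnn : (0:ℝ) ≤ ‖v (k+1)‖ := norm_nonneg _
    have hsq : ‖v (k+1)‖^2 ≤ (β * ‖v k‖ + η * ‖g k‖)^2 := by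
      apply pow_le_pow_left₀ hnn htri
    have key : (β * ‖v k‖ + η * ‖g k‖)^2 ≤ β * ‖v k‖^2 + η^2/(1-β) * ‖g k‖^2 := by
      set a := ‖v k‖
      set b := ‖g k‖
      set c := η^2/(1-β) with hcdef
      have hc : c * (1-β) = η^2 := by rw [hcdef]; field_simp
      have hpos : 0 ≤ β * ((1-β)*a - η*b)^2 := mul_nonneg hβ0 (sq_nonneg _)
      nlinarith [hpos, hc, hb, mul_pos hb hb, sq_nonneg (a - b), sq_nonneg b]
    linarith
  -- summed bound
  have hsum : ∀ N, ∑ k ∈ Finset.range (N+1), ‖v k‖^2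
      ≤ β * ∑ k ∈ Finset.range N, ‖v k‖^2 + η^2/(1-β) * ∑ k ∈ Finset.range N, ‖g k‖^2 := by
    intro N
    induction N with
    | zero => simp [hv0]
    | succ n ih =>
      rw [Finset.sum_range_succ] at ih
      rw [Finset.sum_range_succ (n := n+1), Finset.sum_range_succ (f := fun k => ‖v k‖^2) (n := n),
        Finset.sum_range_succ (f := fun k => ‖g k‖^2) (n := n)]
      have := hrec n
      nlinarith [ih, this]
  have hv2 : ∑ k ∈ Finset.range K, ‖v k‖^2 ≤ η^2/(1-β)^2 * ∑ k ∈ Finset.range K, ‖g k‖^2 := by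
    have h1 : ∑ k ∈ Finset.range K, ‖v k‖^2 ≤ ∑ k ∈ Finset.range (K+1), ‖v k‖^2 := by
      rw [Finset.sum_range_succ]
      nlinarith [sq_nonneg ‖v K‖]
    have h2 := hsum K
    have hvnn : (0:ℝ) ≤ ∑ k ∈ Finset.range K, ‖v k‖^2 := by positivity
    have : (1-β) * ∑ k ∈ Finset.range K, ‖v k‖^2 ≤ η^2/(1-β) * ∑ k ∈ Finset.range K, ‖g k‖^2 := by
      linarith
    have key2 : ∑ k ∈ Finset.range K, ‖v k‖^2
        ≤ (η^2/(1-β) * ∑ k ∈ Finset.range K, ‖g k‖^2) / (1-β) := by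
      rw [le_div_iff₀ hb]; linarith [this]
    have heq : (η^2/(1-β) * ∑ k ∈ Finset.range K, ‖g k‖^2) / (1-β)
        = η^2/(1-β)^2 * ∑ k ∈ Finset.range K, ‖g k‖^2 := by
      have hne := hb.ne'
      field_simp
    linarith [key2, heq.ge, heq.le]
  calc ∑ k ∈ Finset.range K, ‖z k - x k‖^2
      = β^2/(1-β)^2 * ∑ k ∈ Finset.range K, ‖v k‖^2 := by
        rw [Finset.mul_sum]
        apply Finset.sum_congr rfl
        intro k _
        rw [hzx k, norm_smul, Real.norm_eq_abs, abs_of_nonneg (div_nonneg hβ0 hb.le),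
          mul_pow, div_pow]
    _ ≤ β^2/(1-β)^2 * (η^2/(1-β)^2 * ∑ k ∈ Finset.range K, ‖g k‖^2) := by
        apply mul_le_mul_of_nonneg_left hv2 (by positivity)
    _ = η^2 * β^2 / (1-β)^4 * ∑ k ∈ Finset.range K, ‖g k‖^2 := by
        have hne := hb.ne'
        field_simp
end

section
/- (Lemma A.3 matrix form) Under the same assumptions, let G̃ and G be the d×N matrices with columns g̃^i = ∑_j w_{ij}∇F_j(x;d^j) and g^i = ∇F_i(x;d^i) respectively. Then E[‖G̃ − G‖_F²] ≤ 4N(σ² + ζ²). -/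
open MeasureTheory

/-- Weighted Cauchy–Schwarz: the squared norm of a weighted sum is bounded by
the total absolute weight times the weighted sum of squared norms. -/
lemma cs_aux {E : Type*} [NormedAddCommGroup E] [NormedSpace ℝ E] {N : ℕ}
    (c : Fin N → ℝ) (v : Fin N → E) :
    ‖∑ j, c j • v j‖ ^ 2 ≤ (∑ j, |c j|) * (∑ j, |c j| * ‖v j‖ ^ 2) := by
  have h1 : ‖∑ j, c j • v j‖ ≤ ∑ j, |c j| * ‖v j‖ := by
    refine (norm_sum_le _ _).trans_eq ?_
    simp [norm_smul]
  have hnn : (0:ℝ) ≤ ∑ j, |c j| * ‖v j‖ :=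
    Finset.sum_nonneg fun j _ => mul_nonneg (abs_nonneg _) (norm_nonneg _)
  have h2 : ‖∑ j, c j • v j‖ ^ 2 ≤ (∑ j, |c j| * ‖v j‖) ^ 2 := by
    have := norm_nonneg (∑ j, c j • v j)
    nlinarith
  refine h2.trans ?_
  have h3 : (∑ j, |c j| * ‖v j‖) = ∑ j, Real.sqrt |c j| * (Real.sqrt |c j| * ‖v j‖) := by
    refine Finset.sum_congr rfl fun j _ => ?_
    rw [← mul_assoc, Real.mul_self_sqrt (abs_nonneg _)]
  rw [h3]
  refine (Finset.sum_mul_sq_le_sq_mul_sq _ _ _).trans_eq ?_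
  congr 1
  · exact Finset.sum_congr rfl fun j _ => Real.sq_sqrt (abs_nonneg _)
  · refine Finset.sum_congr rfl fun j _ => ?_
    rw [mul_pow, Real.sq_sqrt (abs_nonneg _)]

/-- Lemma A.3 (matrix form).  Under the bounded-variance assumptions, with the
NGC updates `g̃ⁱ = ∑_j w i j • G j` forming the columns of `G̃` and the
stochastic gradients `Gⁱ` the columns of `G`,
`E[‖G̃ − G‖_F²] ≤ 4N(σ² + ζ²)` (the squared Frobenius norm being the sum of
the squared Euclidean norms of the columns). -/
theorem stmt_16 {Ω : Type*} {mΩ : MeasurableSpace Ω} (μ : Measure Ω)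
    [IsProbabilityMeasure μ] {d N : ℕ} (hN : 0 < N) (σ ζ : ℝ)
    (G : Fin N → Ω → EuclideanSpace ℝ (Fin d))
    (h : Fin N → EuclideanSpace ℝ (Fin d))
    (w : Fin N → Fin N → ℝ)
    (hw_nonneg : ∀ i j, 0 ≤ w i j)
    (hw_row : ∀ i, ∑ j, w i j = 1)
    (hw_col : ∀ j, ∑ i, w i j = 1)
    (hind : ProbabilityTheory.iIndepFun G μ)
    (hmem : ∀ i, MemLp (G i) 2 μ)
    (hmean : ∀ i, ∫ ω, G i ω ∂μ = h i)
    (hvar : ∀ i, ∫ ω, ‖G i ω - h i‖ ^ 2 ∂μ ≤ σ ^ 2)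
    (hhet : ∀ i, ‖h i - (1 / N : ℝ) • ∑ j, h j‖ ^ 2 ≤ ζ ^ 2) :
    ∫ ω, ∑ i, ‖(∑ j, w i j • G j ω) - G i ω‖ ^ 2 ∂μ
      ≤ 4 * N * (σ ^ 2 + ζ ^ 2) := by
  classical
  set hbar : EuclideanSpace ℝ (Fin d) := (1 / N : ℝ) • ∑ j, h j with hbar_def
  have hσ2 : (0:ℝ) ≤ σ ^ 2 := sq_nonneg σ
  have hζ2 : (0:ℝ) ≤ ζ ^ 2 := sq_nonneg ζ
  have hG1 : ∀ j, Integrable (G j) μ := fun j => (hmem j).integrable (by norm_num)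
  have hGint : ∀ j, Integrable (fun ω => G j ω - h j) μ := fun j =>
    (hG1 j).sub (integrable_const _)
  have hfj : ∀ j, Integrable (fun ω => ‖G j ω - h j‖ ^ 2) μ := fun j =>
    ((hmem j).sub (memLp_const _)).norm.integrable_sq
  have key : ∀ i : Fin N,
      ∫ ω, ‖(∑ j, w i j • G j ω) - G i ω‖ ^ 2 ∂μ ≤ 4 * (σ ^ 2 + ζ ^ 2) := by
    intro i
    set c : Fin N → ℝ := fun j => w i j - (if j = i then 1 else 0) with hc_def
    have hwii : w i i ≤ 1 := by
      rw [← hw_row i]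
      exact Finset.single_le_sum (fun j _ => hw_nonneg i j) (Finset.mem_univ i)
    have habs : ∀ j, |c j| = (if j = i then 1 - w i i else w i j) := by
      intro j
      by_cases hj : j = i
      · subst hj
        rw [if_pos rfl]
        have hcj : c j = w j j - 1 := by simp [hc_def]
        rw [hcj, abs_of_nonpos (by linarith [hwii])]
        ring
      · simp only [hc_def, if_neg hj]
        rw [sub_zero, abs_of_nonneg (hw_nonneg i j)]
    have hc_abs : ∑ j, |c j| ≤ 2 := by
      have e1 : ∑ j ∈ Finset.univ.erase i, |c j| + |c i| = ∑ j, |c j| :=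
        Finset.sum_erase_add _ _ (Finset.mem_univ i)
      have e2 : ∑ j ∈ Finset.univ.erase i, w i j + w i i = ∑ j, w i j :=
        Finset.sum_erase_add _ _ (Finset.mem_univ i)
      have e3 : ∑ j ∈ Finset.univ.erase i, |c j| = ∑ j ∈ Finset.univ.erase i, w i j := by
        refine Finset.sum_congr rfl fun j hj => ?_
        rw [habs j, if_neg (Finset.mem_erase.mp hj).1]
      have e4 : |c i| = 1 - w i i := by rw [habs i, if_pos rfl]
      have := hw_row i
      have := hw_nonneg i i
      linarith
    have hS0 : (0:ℝ) ≤ ∑ j, |c j| := Finset.sum_nonneg fun j _ => abs_nonneg _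
    set Y : EuclideanSpace ℝ (Fin d) := ∑ j, c j • (h j - hbar) with hY_def
    set X : Ω → EuclideanSpace ℝ (Fin d) := fun ω => ∑ j, c j • (G j ω - h j) with hX_def
    have hXmem : MemLp X 2 μ := by
      have hXeq : X = ∑ j, (c j • fun ω => G j ω - h j) := by
        funext ω
        simp [hX_def, Finset.sum_apply]
      rw [hXeq]
      exact memLp_finset_sum' _ fun j _ => ((hmem j).sub (memLp_const _)).const_smul (c j)
    have hXint : Integrable X μ := hXmem.integrable (by norm_num)
    have h0 : ∑ j, c j = 0 := by
      simp [hc_def, Finset.sum_sub_distrib, hw_row i]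
    have hpt : ∀ ω, (∑ j, w i j • G j ω) - G i ω = X ω + Y := by
      intro ω
      have e1 : X ω + Y = ∑ j, c j • G j ω - (∑ j, c j) • hbar := by
        simp only [hX_def, hY_def, smul_sub, Finset.sum_sub_distrib, Finset.sum_smul]
        abel
      rw [e1, h0, zero_smul, sub_zero]
      simp [hc_def, sub_smul, Finset.sum_sub_distrib, ite_smul, Finset.sum_ite_eq']
    have hXmean : ∫ ω, X ω ∂μ = 0 := by
      simp only [hX_def]
      have hint : ∀ j ∈ Finset.univ, Integrable (fun ω => c j • (G j ω - h j)) μ := by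
        intro j _
        exact Integrable.smul (c j) (hGint j)
      rw [integral_finset_sum _ hint]
      refine Finset.sum_eq_zero fun j _ => ?_
      rw [integral_smul, integral_sub (hG1 j) (integrable_const _), hmean j, integral_const]
      simp
    have hXsq : Integrable (fun ω => ‖X ω‖ ^ 2) μ := hXmem.norm.integrable_sq
    have hinner : Integrable (fun ω => (inner ℝ Y (X ω) : ℝ)) μ := hXint.const_inner Y
    have hXbound : ∫ ω, ‖X ω‖ ^ 2 ∂μ ≤ 4 * σ ^ 2 := by
      have step1 : ∫ ω, ‖X ω‖ ^ 2 ∂μ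
          ≤ ∫ ω, (∑ j, |c j|) * (∑ j, |c j| * ‖G j ω - h j‖ ^ 2) ∂μ := by
        refine integral_mono hXsq ?_ (fun ω => cs_aux c _)
        exact ((integrable_finset_sum _ fun j _ => (hfj j).const_mul _).const_mul _)
      refine step1.trans ?_
      rw [integral_const_mul, integral_finset_sum _ (fun j _ => (hfj j).const_mul _)]
      simp_rw [integral_const_mul]
      have hsum : ∑ j, |c j| * ∫ ω, ‖G j ω - h j‖ ^ 2 ∂μ ≤ ∑ j, |c j| * σ ^ 2 :=
        Finset.sum_le_sum fun j _ => mul_le_mul_of_nonneg_left (hvar j) (abs_nonneg _)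
      have h2 : ∑ j, |c j| * σ ^ 2 ≤ 2 * σ ^ 2 := by
        rw [← Finset.sum_mul]
        exact mul_le_mul_of_nonneg_right hc_abs hσ2
      have hA0 : (0:ℝ) ≤ ∑ j, |c j| * ∫ ω, ‖G j ω - h j‖ ^ 2 ∂μ :=
        Finset.sum_nonneg fun j _ =>
          mul_nonneg (abs_nonneg _) (integral_nonneg fun ω => sq_nonneg _)
      nlinarith
    have hYbound : ‖Y‖ ^ 2 ≤ 4 * ζ ^ 2 := by
      have hcs := cs_aux c (fun j => h j - hbar)
      have h2 : ∑ j, |c j| * ‖h j - hbar‖ ^ 2 ≤ ∑ j, |c j| * ζ ^ 2 :=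
        Finset.sum_le_sum fun j _ => mul_le_mul_of_nonneg_left (hhet j) (abs_nonneg _)
      have h3 : ∑ j, |c j| * ζ ^ 2 ≤ 2 * ζ ^ 2 := by
        rw [← Finset.sum_mul]
        exact mul_le_mul_of_nonneg_right hc_abs hζ2
      have hA0 : (0:ℝ) ≤ ∑ j, |c j| * ‖h j - hbar‖ ^ 2 :=
        Finset.sum_nonneg fun j _ => mul_nonneg (abs_nonneg _) (sq_nonneg _)
      nlinarith
    have hfun : (fun ω => ‖(∑ j, w i j • G j ω) - G i ω‖ ^ 2)
        = fun ω => ‖X ω‖ ^ 2 + (2 * (inner ℝ Y (X ω) : ℝ) + ‖Y‖ ^ 2) := by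
      funext ω
      rw [hpt ω, norm_add_sq_real, real_inner_comm]
      ring
    calc ∫ ω, ‖(∑ j, w i j • G j ω) - G i ω‖ ^ 2 ∂μ
        = ∫ ω, (‖X ω‖ ^ 2 + (2 * (inner ℝ Y (X ω) : ℝ) + ‖Y‖ ^ 2)) ∂μ := by rw [hfun]
      _ = ∫ ω, ‖X ω‖ ^ 2 ∂μ + (2 * ∫ ω, (inner ℝ Y (X ω) : ℝ) ∂μ + ‖Y‖ ^ 2) := by
          have hint2 : Integrable (fun ω => 2 * (inner ℝ Y (X ω) : ℝ) + ‖Y‖ ^ 2) μ := by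
            exact (hinner.const_mul 2).add (integrable_const _)
          rw [integral_add hXsq hint2,
            integral_add (hinner.const_mul 2) (integrable_const _),
            integral_const_mul, integral_const]
          simp
      _ = ∫ ω, ‖X ω‖ ^ 2 ∂μ + ‖Y‖ ^ 2 := by
          rw [integral_inner hXint Y, hXmean, inner_zero_right]
          ring
      _ ≤ 4 * σ ^ 2 + 4 * ζ ^ 2 := add_le_add hXbound hYbound
      _ = 4 * (σ ^ 2 + ζ ^ 2) := by ring
  have hint_i : ∀ i ∈ Finset.univ,
      Integrable (fun ω => ‖(∑ j, w i j • G j ω) - G i ω‖ ^ 2) μ := by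
    intro i _
    have hm : MemLp (fun ω => (∑ j, w i j • G j ω) - G i ω) 2 μ := by
      have hs : MemLp (fun ω => ∑ j, w i j • G j ω) 2 μ := by
        have : (fun ω => ∑ j, w i j • G j ω) = ∑ j, (w i j • G j) := by
          funext ω; simp [Finset.sum_apply]
        rw [this]
        exact memLp_finset_sum' _ fun j _ => (hmem j).const_smul (w i j)
      exact hs.sub (hmem i)
    exact hm.norm.integrable_sq
  rw [integral_finset_sum _ hint_i]
  calc ∑ i, ∫ ω, ‖(∑ j, w i j • G j ω) - G i ω‖ ^ 2 ∂μ
      ≤ ∑ _i : Fin N, 4 * (σ ^ 2 + ζ ^ 2) := Finset.sum_le_sum fun i _ => key i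
    _ = N * (4 * (σ ^ 2 + ζ ^ 2)) := by
        simp [Finset.sum_const, Finset.card_univ, nsmul_eq_mul]
    _ = 4 * N * (σ ^ 2 + ζ ^ 2) := by ring
end
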